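/- For every integer j ≥ 2, the determinant of the (j−1)×(j−1) matrix C with entries c_{r,s} = binom(j+1−s, s−r), where the row index r ranges over 0 ≤ r ≤ j−2 and the column index s ranges over 1 ≤ s ≤ j−1 (with binom(a,b) = 0 when b < 0 or b > a), equals the Catalan number C_j = binom(2j, j)/(j+1); in particular this matrix is invertible over ℚ. -/

import Mathlib

/-- The binomial coefficient `binom a b : ℚ` for integer arguments, equal to `0`
when `b < 0` or `b > a`. -/
def binom (a b : ℤ) : ℚ :=
  if 0 ≤ b ∧ b ≤ a then (a.toNat.choose b.toNat : ℚ) else 0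

lemma binom_neg {a b : ℤ} (hb : b < 0) : binom a b = 0 := by
  simp [binom]; omega

lemma binom_zero {a : ℤ} (ha : 0 ≤ a) : binom a 0 = 1 := by
  simp [binom, ha]

lemma binom_absorb {a b : ℤ} (hb : 0 < b) :
    (b : ℚ) * binom a b = ((a : ℚ) - b + 1) * binom a (b - 1) := by
  by_cases h : b ≤ a
  · have h0 : 0 ≤ b - 1 := by omega
    have h1 : b - 1 ≤ a := by omega
    rw [binom, binom, if_pos ⟨le_of_lt hb, h⟩, if_pos ⟨h0, h1⟩]
    have hb' : b.toNat = (b - 1).toNat + 1 := by omega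
    have := Nat.choose_succ_right_eq a.toNat (b - 1).toNat
    rw [← hb'] at this
    have hcast : ((a.toNat.choose b.toNat * b.toNat : ℕ) : ℚ)
        = ((a.toNat.choose (b-1).toNat * (a.toNat - (b-1).toNat) : ℕ) : ℚ) := by
      exact_mod_cast congrArg (Nat.cast (R := ℚ)) this
    push_cast at hcast
    have e1 : ((b.toNat : ℚ)) = (b : ℚ) := by
      have : ((b.toNat : ℤ) : ℚ) = (b : ℚ) := by rw [Int.toNat_of_nonneg (le_of_lt hb)]
      exact_mod_cast this
    have e2 : ((a.toNat : ℚ)) = (a : ℚ) := by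
      have : ((a.toNat : ℤ) : ℚ) = (a : ℚ) := by rw [Int.toNat_of_nonneg (by omega)]
      exact_mod_cast this
    have e3 : (((b-1).toNat : ℚ)) = (b : ℚ) - 1 := by
      have : (((b-1).toNat : ℤ) : ℚ) = ((b - 1 : ℤ) : ℚ) := by rw [Int.toNat_of_nonneg h0]
      push_cast at this; exact_mod_cast this
    have e4 : (((a.toNat - (b-1).toNat : ℕ)) : ℚ) = (a : ℚ) - b + 1 := by
      have hle : (b-1).toNat ≤ a.toNat := by omega
      push_cast [Nat.cast_sub hle]
      rw [e2, e3]; ring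
    rw [e4] at hcast
    rw [e1] at hcast
    linarith [hcast]
  · by_cases h2 : b - 1 ≤ a
    · have hab : a = b - 1 := by omega
      have : ((a:ℚ) - b + 1) = 0 := by rw [hab]; push_cast; ring
      rw [this, binom, if_neg (by omega), zero_mul, mul_zero]
    · rw [binom, binom, if_neg (by omega), if_neg (by omega), mul_zero, mul_zero]

/-- Entries of the upper-triangular factor in the `LU` decomposition. -/
noncomputable def bU (j : ℕ) (r s : ℤ) : ℚ :=
  binom ((j : ℤ) - s) (s - r) * (((j : ℚ) + r + 1) * ((j : ℚ) + r - 2 * s))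
    / (((s : ℚ) + 1) * ((j : ℚ) + 1 - r))

/-- Subdiagonal entries of the lower-triangular factor. -/
noncomputable def bL (j : ℕ) (r : ℤ) : ℚ :=
  ((r : ℚ) * ((j : ℚ) + 2 - r)) / (((j : ℚ) + r) * ((j : ℚ) + 1 - r))

lemma frac_main (x y J R S : ℚ) (d1 : S+1 ≠ 0) (d2 : J+1-R ≠ 0) (d3 : J+2-R ≠ 0)
    (d4 : J+R ≠ 0) (rel : (S+1-R)*x = (J+R-2*S)*y) :
    x = y*((J+R+1)*(J+R-2*S))/((S+1)*(J+1-R))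
      + (R*(J+2-R)/((J+R)*(J+1-R))) * (x*((J+R)*(J+R-1-2*S))/((S+1)*(J+2-R))) := by
  rw [div_mul_div_comm, div_add_div _ _ (mul_ne_zero d1 d2)
    (mul_ne_zero (mul_ne_zero d4 d2) (mul_ne_zero d1 d3)),
    eq_div_iff (mul_ne_zero (mul_ne_zero d1 d2) (mul_ne_zero (mul_ne_zero d4 d2) (mul_ne_zero d1 d3)))]
  linear_combination ((J+R+1) * ((J+R)*(J+1-R)*((S+1)*(J+2-R)))) * rel

lemma key0 (j : ℕ) (s : ℤ) (hs0 : 0 ≤ s) (hs : s ≤ (j : ℤ) - 2) :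
    binom ((j : ℤ) - s) (s + 1) = bU j 0 s := by
  have rel := binom_absorb (a := (j : ℤ) - s) (b := s + 1) (by omega)
  rw [show s + 1 - 1 = s from by ring] at rel
  push_cast at rel
  have hjq : (2:ℚ) ≤ (j:ℚ) := by exact_mod_cast (by omega : (2:ℤ) ≤ (j:ℤ))
  have hsq0 : (0:ℚ) ≤ (s:ℚ) := by exact_mod_cast hs0
  have d1 : ((s:ℚ) + 1) ≠ 0 := by nlinarith
  have d2 : ((j:ℚ) + 1) ≠ 0 := by nlinarith
  rw [bU, show ((0:ℤ):ℚ) = 0 from rfl, sub_zero]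
  have key : binom ((j:ℤ) - s) s * (((j:ℚ) + 0 + 1) * ((j:ℚ) + 0 - 2 * s))
      = ((j:ℚ) + 1) * (((s:ℚ) + 1) * binom ((j:ℤ) - s) (s + 1)) := by
    linear_combination (-((j:ℚ) + 1)) * rel
  rw [key]
  field_simp
  ring

lemma key1 (j : ℕ) (r s : ℤ) (hr0 : 1 ≤ r) (hr : r ≤ (j : ℤ) - 2) (hs0 : 0 ≤ s)
    (hs : s ≤ (j : ℤ) - 2) :
    binom ((j : ℤ) - s) (s + 1 - r) = bU j r s + bL j r * bU j (r - 1) s := by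
  have hjq : (2:ℚ) ≤ (j:ℚ) := by exact_mod_cast (by omega : (2:ℤ) ≤ (j:ℤ))
  have hrq : (r:ℚ) ≤ (j:ℚ) - 2 := by exact_mod_cast hr
  have hrq0 : (1:ℚ) ≤ (r:ℚ) := by exact_mod_cast hr0
  have hsq0 : (0:ℚ) ≤ (s:ℚ) := by exact_mod_cast hs0
  have hsq : (s:ℚ) ≤ (j:ℚ) - 2 := by exact_mod_cast hs
  have d1 : ((s:ℚ) + 1) ≠ 0 := by nlinarith
  have d2 : ((j:ℚ) + 1 - r) ≠ 0 := by nlinarith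
  have d3 : ((j:ℚ) + 2 - r) ≠ 0 := by nlinarith
  have d4 : ((j:ℚ) + r) ≠ 0 := by nlinarith
  rcases lt_trichotomy (s + 1 - r) 0 with hb | hb | hb
  · rw [binom_neg hb, bU, bU, binom_neg (by omega : s - r < 0),
      binom_neg (by omega : s - (r - 1) < 0)]
    simp
  · have hrs : r = s + 1 := by omega
    rw [hb, binom_zero (by omega : (0:ℤ) ≤ (j:ℤ) - s), bU, bU,
      binom_neg (by omega : s - r < 0), show s - (r - 1) = 0 from by omega,
      binom_zero (by omega : (0:ℤ) ≤ (j:ℤ) - s), bL]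
    have hrsq : (r:ℚ) = (s:ℚ) + 1 := by exact_mod_cast hrs
    push_cast
    rw [hrsq]
    have hjs : ((j:ℚ) - s) ≠ 0 := by nlinarith
    have hjs1 : ((j:ℚ) + 1 - s) ≠ 0 := by nlinarith
    have d4' : ((j:ℚ) + (s + 1)) ≠ 0 := by nlinarith
    have e5 : ((j:ℚ) + 1 - (s + 1)) ≠ 0 := by intro h; linarith
    have e6 : ((j:ℚ) + 1 - (s + 1 - 1)) ≠ 0 := by intro h; linarith
    field_simp
    ring
  · have rel := binom_absorb (a := (j : ℤ) - s) hb
    rw [show s + 1 - r - 1 = s - r from by ring] at rel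
    push_cast at rel
    have rel' : ((s:ℚ) + 1 - r) * binom ((j:ℤ) - s) (s + 1 - r)
        = ((j:ℚ) + r - 2 * s) * binom ((j:ℤ) - s) (s - r) := by
      linear_combination rel
    rw [bU, bU, bL, show s - (r - 1) = s + 1 - r from by ring]
    simp only [Int.cast_sub, Int.cast_one]
    linear_combination frac_main (binom ((j:ℤ) - s) (s + 1 - r)) (binom ((j:ℤ) - s) (s - r))
      (j:ℚ) (r:ℚ) (s:ℚ) d1 d2 d3 d4 rel'

lemma prod_diag (j : ℕ) : ∀ m : ℕ, m ≤ j →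
    ∏ k ∈ Finset.range m, (((j:ℚ)+k+1)*((j:ℚ)-k)/(((k:ℚ)+1)*((j:ℚ)+1-k)))
      = ((j:ℚ)+1-m) * ((j+m).choose m : ℚ) / ((j:ℚ)+1) := by
  intro m
  induction m with
  | zero =>
    intro _
    have h : ((j:ℚ)+1) ≠ 0 := by positivity
    simp [div_self h]
  | succ m ih =>
    intro hm
    have hm' : m ≤ j := by omega
    have hmq : (m:ℚ) ≤ (j:ℚ) - 1 := by
      have : (m:ℚ) + 1 ≤ (j:ℚ) := by exact_mod_cast hm
      linarith
    have d1 : ((m:ℚ)+1) ≠ 0 := by positivity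
    have d2 : ((j:ℚ)+1-m) ≠ 0 := by
      have : (0:ℚ) ≤ (m:ℚ) := by positivity
      intro h; nlinarith
    have d3 : ((j:ℚ)+1) ≠ 0 := by positivity
    have cc : (((j+m+1).choose (m+1) : ℕ) : ℚ) * ((m:ℚ)+1)
        = ((j:ℚ)+(m:ℚ)+1) * (((j+m).choose m : ℕ) : ℚ) := by
      have := Nat.add_one_mul_choose_eq (j+m) m
      have := congrArg (Nat.cast (R := ℚ)) this
      push_cast at this
      linarith
    rw [Finset.prod_range_succ, ih hm']
    have e1 : j + (m+1) = j + m + 1 := by omega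
    rw [e1]
    push_cast
    rw [div_mul_div_comm, div_eq_div_iff (by
        exact mul_ne_zero d3 (mul_ne_zero d1 d2)) d3]
    linear_combination (-(((j:ℚ)+1) * (((j:ℚ)+1-(m:ℚ)) * ((j:ℚ)-(m:ℚ))))) * cc

/-- For `j ≥ 2`, the `(j−1)×(j−1)` matrix with entries `c_{r,s} = binom(j+1−s, s−r)`
(row index `0 ≤ r ≤ j−2`, column index `1 ≤ s ≤ j−1`) has determinant the Catalan
number `C_j`; in particular it is invertible over `ℚ`. -/
theorem binomial_matrix_det (j : ℕ) (hj : 2 ≤ j) :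
    Matrix.det (Matrix.of fun r s : Fin (j - 1) =>
        binom ((j : ℤ) + 1 - ((s : ℤ) + 1)) (((s : ℤ) + 1) - (r : ℤ))) =
      (catalan j : ℚ) ∧
    IsUnit (Matrix.of fun r s : Fin (j - 1) =>
        binom ((j : ℤ) + 1 - ((s : ℤ) + 1)) (((s : ℤ) + 1) - (r : ℤ))) := by
  set M : Matrix (Fin (j-1)) (Fin (j-1)) ℚ := Matrix.of fun r s : Fin (j - 1) =>
      binom ((j : ℤ) + 1 - ((s : ℤ) + 1)) (((s : ℤ) + 1) - (r : ℤ)) with hM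
  set Lmat : Matrix (Fin (j-1)) (Fin (j-1)) ℚ := Matrix.of fun r s : Fin (j-1) =>
      if (r:ℕ) = (s:ℕ) then (1:ℚ)
      else if (r:ℕ) = (s:ℕ)+1 then bL j ((r:ℕ):ℤ) else 0 with hL
  set Umat : Matrix (Fin (j-1)) (Fin (j-1)) ℚ := Matrix.of fun r s : Fin (j-1) =>
      bU j ((r:ℕ):ℤ) ((s:ℕ):ℤ) with hU
  have hrb : ∀ r : Fin (j-1), ((r:ℕ):ℤ) ≤ (j:ℤ) - 2 := by
    intro r; have := r.isLt; omega
  -- factorization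
  have hfac : M = Lmat * Umat := by
    ext r s
    rw [Matrix.mul_apply]
    have hsum : ∀ k : Fin (j-1), Lmat r k * Umat k s
        = (if k = r then Umat r s else 0)
          + (if (r:ℕ) = (k:ℕ)+1 then bL j ((r:ℕ):ℤ) * Umat k s else 0) := by
      intro k
      by_cases h1 : (r:ℕ) = (k:ℕ)
      · have hk : k = r := Fin.ext h1.symm
        subst hk
        simp [hL, Matrix.of_apply]
      · have hkr : ¬ (k = r) := fun h => h1 (by rw [h])
        rw [hL]
        simp only [Matrix.of_apply]
        rw [if_neg h1, if_neg hkr, zero_add]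
        by_cases h2 : (r:ℕ) = (k:ℕ)+1
        · rw [if_pos h2, if_pos h2]
        · rw [if_neg h2, if_neg h2, zero_mul]
    rw [Finset.sum_congr rfl (fun k _ => hsum k), Finset.sum_add_distrib,
      Finset.sum_ite_eq' Finset.univ r, if_pos (Finset.mem_univ r)]
    have hMrs : M r s = binom ((j:ℤ) - ((s:ℕ):ℤ)) (((s:ℕ):ℤ) + 1 - ((r:ℕ):ℤ)) := by
      rw [hM]
      simp only [Matrix.of_apply]
      congr 1 <;> push_cast <;> ring
    by_cases hr0 : (r:ℕ) = 0
    · rw [Finset.sum_eq_zero (fun k _ => if_neg (by omega)), add_zero]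
      show M r s = Umat r s
      rw [hMrs, hU]
      simp only [Matrix.of_apply]
      rw [hr0]
      rw [show (((0:ℕ)):ℤ) = 0 from rfl, sub_zero]
      exact key0 j ((s:ℕ):ℤ) (by positivity) (hrb s)
    · have hr1 : 1 ≤ (r:ℕ) := by omega
      have hk0lt : (r:ℕ) - 1 < j - 1 := by have := r.isLt; omega
      set k0 : Fin (j-1) := ⟨(r:ℕ)-1, hk0lt⟩ with hk0
      rw [Finset.sum_eq_single k0
        (fun k _ hk => if_neg (fun h => hk (Fin.ext (by simp [hk0]; omega))))
        (fun h => absurd (Finset.mem_univ k0) h)]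
      rw [if_pos (by simp [hk0]; omega)]
      show M r s = Umat r s + bL j ((r:ℕ):ℤ) * Umat k0 s
      rw [hMrs, hU]
      simp only [Matrix.of_apply]
      have hcast : ((k0:ℕ):ℤ) = ((r:ℕ):ℤ) - 1 := by simp [hk0]; omega
      rw [hcast]
      exact key1 j ((r:ℕ):ℤ) ((s:ℕ):ℤ) (by exact_mod_cast hr1) (hrb r)
        (by positivity) (hrb s)
  -- determinants of the factors
  have hdetL : Lmat.det = 1 := by
    rw [Matrix.det_of_lowerTriangular Lmat (by
      intro a b hab
      rw [hL]
      simp only [Matrix.of_apply]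
      have : (a:ℕ) < (b:ℕ) := hab
      rw [if_neg (by omega), if_neg (by omega)])]
    have : ∀ i : Fin (j-1), Lmat i i = 1 := by
      intro i; rw [hL]; simp
    rw [Finset.prod_congr rfl (fun i _ => this i)]
    simp
  have hdetU : Umat.det
      = ∏ i : Fin (j-1), bU j ((i:ℕ):ℤ) ((i:ℕ):ℤ) := by
    rw [Matrix.det_of_upperTriangular (by
      intro a b hab
      rw [hU]
      simp only [Matrix.of_apply]
      have : (b:ℕ) < (a:ℕ) := hab
      rw [bU, binom_neg (by omega), zero_mul, zero_div])]
    rfl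
  -- the diagonal product
  have hdiag : ∀ i : Fin (j-1), bU j ((i:ℕ):ℤ) ((i:ℕ):ℤ)
      = ((j:ℚ)+(i:ℕ)+1)*((j:ℚ)-(i:ℕ))/((((i:ℕ):ℚ)+1)*((j:ℚ)+1-(i:ℕ))) := by
    intro i
    rw [bU, sub_self, binom_zero (by have := hrb i; omega), one_mul]
    push_cast
    ring_nf
  have hprod : ∏ i : Fin (j-1), bU j ((i:ℕ):ℤ) ((i:ℕ):ℤ)
      = ((j:ℚ)+1-(j-1:ℕ)) * ((j+(j-1)).choose (j-1) : ℚ) / ((j:ℚ)+1) := by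
    rw [Finset.prod_congr rfl (fun i _ => hdiag i)]
    rw [Fin.prod_univ_eq_prod_range
      (fun k : ℕ => ((j:ℚ)+k+1)*((j:ℚ)-k)/(((k:ℚ)+1)*((j:ℚ)+1-k))) (j-1)]
    exact prod_diag j (j-1) (by omega)
  -- relate to the Catalan number
  have hcat : (catalan j : ℚ)
      = ((j:ℚ)+1-(j-1:ℕ)) * ((j+(j-1)).choose (j-1) : ℚ) / ((j:ℚ)+1) := by
    obtain ⟨p, rfl⟩ : ∃ p, j = p + 2 := ⟨j - 2, by omega⟩
    have h1 : (p+2+1) * catalan (p+2) = (p+2).centralBinom :=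
      succ_mul_catalan_eq_centralBinom (p+2)
    have h2 : (p+2).centralBinom = (2*(p+2)).choose (p+2) := rfl
    have h3 : (2*(p+2)).choose (p+2) = 2 * ((2*p+3).choose (p+1)) := by
      have e1 : (2*(p+2)).choose (p+2) = (2*p+3).choose (p+1) + (2*p+3).choose (p+1+1) := by
        rw [show 2*(p+2) = (2*p+3)+1 from by ring, show p+2 = (p+1)+1 from rfl,
          Nat.choose_succ_succ']
      have e2 : (2*p+3).choose (p+1) = (2*p+3).choose (p+1+1) := by
        have h := Nat.choose_symm (n := 2*p+3) (k := p+1+1) (by omega)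
        rw [show 2*p+3-(p+1+1) = p+1 from by omega] at h
        exact h
      omega
    have h4 : (p+2) + (p+2-1) = 2*p+3 := by omega
    have h5 : (p+2-1) = p+1 := rfl
    rw [h4, h5]
    have hcb : ((p:ℚ)+2+1) * (catalan (p+2) : ℚ) = 2 * ((2*p+3).choose (p+1) : ℚ) := by
      have := congrArg (Nat.cast (R := ℚ)) (h1.trans (h2.trans h3))
      push_cast at this ⊢
      linarith
    have d3 : ((p:ℚ)+2+1) ≠ 0 := by positivity
    rw [show ((p+2:ℕ):ℚ) + 1 - ((p+1:ℕ):ℚ) = 2 from by push_cast; ring]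
    rw [eq_div_iff (by push_cast; positivity)]
    push_cast at hcb ⊢
    linarith
  have hdet : M.det = (catalan j : ℚ) := by
    rw [hfac, Matrix.det_mul, hdetL, hdetU, one_mul, hprod, hcat]
  refine ⟨hdet, ?_⟩
  rw [Matrix.isUnit_iff_isUnit_det]
  show IsUnit M.det
  rw [hdet, isUnit_iff_ne_zero]
  have h1 := succ_mul_catalan_eq_centralBinom j
  have h2 := Nat.centralBinom_pos j
  have : catalan j ≠ 0 := by
    intro h
    rw [h, Nat.mul_zero] at h1
    omega
  exact_mod_cast this
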